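/- Let s₀ be a state from which there is a path of length 1 leading to an error state (i.e., some error transition α ∈ T_err is enabled in s₀). Assume every state has a nonempty persistent set whenever it has enabled transitions (successor-state condition), the state set is finite, and the cycle condition holds. Then there is a finite path from s₀ to an error state consisting only of transitions in the persistent sets of the visited states. -/

import Mathlib

namespace POR

variable {S : Type}

/-- A transition is a deterministic partial function on states; it is enabled
in `s` if it is defined at `s`. -/
def Enabledf (α : S → Option S) (s : S) : Prop := (α s).isSome

/-- Independence of two transitions in a given state: enabledness preservation
(in both directions) and commutativity. -/
def IndepAt (α β : S → Option S) (s : S) : Prop :=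
  (Enabledf α s → (Enabledf β s ↔ ∃ s', α s = some s' ∧ Enabledf β s')) ∧
  (Enabledf β s → (Enabledf α s ↔ ∃ s', β s = some s' ∧ Enabledf α s')) ∧
  (Enabledf α s → Enabledf β s → (α s).bind β = (β s).bind α)

/-- Two transitions are independent if they are independent in every state. -/
def Indep (α β : S → Option S) : Prop := ∀ s, IndepAt α β s

/-- The set of states reachable from `S0` by finite paths of transitions in `T`. -/
def ReachFrom (S0 : Set S) (T : Set (S → Option S)) : Set S :=
  {s | ∃ (n : ℕ) (st : ℕ → S) (tr : ℕ → S → Option S),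
    st 0 ∈ S0 ∧ st n = s ∧
    ∀ i < n, tr i ∈ T ∧ tr i (st i) = some (st (i + 1))}

/-- The set of states reachable from `S0` under the reduced exploration that in each
visited state only takes transitions from its persistent set `P`. -/
def ReachRed (S0 : Set S) (T : Set (S → Option S))
    (P : S → Set (S → Option S)) : Set S :=
  {s | ∃ (n : ℕ) (st : ℕ → S) (tr : ℕ → S → Option S),
    st 0 ∈ S0 ∧ st n = s ∧
    ∀ i < n, tr i ∈ T ∧ tr i ∈ P (st i) ∧ tr i (st i) = some (st (i + 1))}

/-- Error states with respect to a set of error transitions. -/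
def Err (Terr : Set (S → Option S)) : Set S :=
  {s | ∃ (s' : S) (α : S → Option S), α ∈ Terr ∧ α s' = some s}


/-- `P` is persistent in `s`: every finite nonempty path from `s` using only
transitions outside `P` has its last transition independent in its source state
of every transition in `P`. -/
def PersistentIn (P : Set (S → Option S)) (s : S) : Prop :=
  (∀ α ∈ P, Enabledf α s) ∧
  ∀ (n : ℕ) (st : ℕ → S) (tr : ℕ → S → Option S),
    st 0 = s →
    (∀ i ≤ n, tr i ∉ P) →
    (∀ i < n, tr i (st i) = some (st (i + 1))) →
    Enabledf (tr n) (st n) →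
    ∀ β ∈ P, IndepAt (tr n) β (st n)

/-- Cycle condition: on any cycle taken under the reduced exploration, any
transition enabled at some state on the cycle belongs to the persistent set of
some state on the cycle. -/
def CycleCond (T : Set (S → Option S)) (P : S → Set (S → Option S)) : Prop :=
  ∀ (n : ℕ) (st : ℕ → S) (tr : ℕ → S → Option S),
    0 < n → st n = st 0 →
    (∀ i < n, tr i ∈ T ∧ tr i ∈ P (st i) ∧ tr i (st i) = some (st (i + 1))) →
    ∀ α ∈ T, (∃ j < n, Enabledf α (st j)) → ∃ k < n, α ∈ P (st k)

/-- Reduced paths from `s₀` to `s`. -/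
def PathTo (T : Set (S → Option S)) (P : S → Set (S → Option S)) (s₀ s : S) : Prop :=
  ∃ (n : ℕ) (st : ℕ → S) (tr : ℕ → S → Option S),
    st 0 = s₀ ∧ st n = s ∧
    ∀ i < n, tr i ∈ T ∧ tr i ∈ P (st i) ∧ tr i (st i) = some (st (i + 1))

lemma pathTo_extend {T : Set (S → Option S)} {P : S → Set (S → Option S)}
    {s₀ s t : S} {β : S → Option S}
    (h : PathTo T P s₀ s) (hβT : β ∈ T) (hβP : β ∈ P s) (hβs : β s = some t) :
    PathTo T P s₀ t := by
  obtain ⟨n, st, tr, h0, hn, hp⟩ := h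
  refine ⟨n+1, fun i => if i = n+1 then t else st i,
    fun i => if i = n then β else tr i, ?_, ?_, ?_⟩
  · simp [h0]
  · simp
  · intro i hi
    rcases Nat.lt_succ_iff_lt_or_eq.mp hi with h' | h'
    · have h1 : i ≠ n+1 := by omega
      have h2 : i+1 ≠ n+1 := by omega
      have h3 : i ≠ n := by omega
      simp only [if_neg h1, if_neg h2, if_neg h3]
      exact hp i h'
    · subst h'
      have h1 : i ≠ i+1 := by omega
      simp only [if_pos rfl, if_neg h1, hn]
      exact ⟨hβT, hβP, hβs⟩

lemma rtg_pathTo {T : Set (S → Option S)} {P : S → Set (S → Option S)} {s₀ s : S}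
    (h : Relation.ReflTransGen
      (fun a b => ∃ β, β ∈ T ∧ β ∈ P a ∧ β a = some b) s₀ s) :
    PathTo T P s₀ s := by
  induction h with
  | refl => exact ⟨0, fun _ => s₀, fun _ _ => none, rfl, rfl, by omega⟩
  | tail _ hbc ih =>
    obtain ⟨β, hβT, hβP, hβs⟩ := hbc
    exact pathTo_extend ih hβT hβP hβs

/-- if an error transition is enabled in s₀ (a path of length 1 to an
error state), then under the successor-state condition, finiteness, and the cycle
condition there is a path from s₀ to an error state using only transitions in the
persistent sets of the visited states. -/
theorem error_reachable_reduced [Finite S]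
    (T Terr : Set (S → Option S)) (P : S → Set (S → Option S))
    (hTerr : Terr ⊆ T)
    (hPsub : ∀ s, P s ⊆ T)
    (hPpers : ∀ s, PersistentIn (P s) s)
    (hsucc : ∀ s, P s = ∅ ↔ {α | α ∈ T ∧ Enabledf α s} = ∅)
    (hcycle : CycleCond T P)
    (s₀ : S) (α : S → Option S) (hα : α ∈ Terr) (hen : Enabledf α s₀) :
    ∃ (n : ℕ) (st : ℕ → S) (tr : ℕ → S → Option S),
      st 0 = s₀ ∧
      (∀ i < n, tr i ∈ T ∧ tr i ∈ P (st i) ∧ tr i (st i) = some (st (i + 1))) ∧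
      st n ∈ Err Terr := by
  classical
  set R : S → S → Prop := fun a b => ∃ β, β ∈ T ∧ β ∈ P a ∧ β a = some b with hR
  set Good : S → Prop := fun s => Relation.ReflTransGen R s₀ s ∧ Enabledf α s with hGooddef
  have hαT : α ∈ T := hTerr hα
  -- key claim: some Good state has α in its persistent set
  have key : ∃ s, Good s ∧ α ∈ P s := by
    by_contra hcon
    push_neg at hcon
    -- one reduced step from any Good state preserving enabledness of α
    have step : ∀ s, Good s → ∃ β s', β ∈ P s ∧ β s = some s' ∧ Good s' := by
      intro s hs
      have hαP : α ∉ P s := hcon s hs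
      have hne : (P s).Nonempty := by
        rw [Set.nonempty_iff_ne_empty]
        intro hPe
        have := (hsucc s).mp hPe
        have : α ∈ ({α | α ∈ T ∧ Enabledf α s} : Set (S → Option S)) := ⟨hαT, hs.2⟩
        rw [hsucc s |>.mp hPe] at this
        exact this
      obtain ⟨β, hβ⟩ := hne
      obtain ⟨hEnP, hpers⟩ := hPpers s
      have hβen : Enabledf β s := hEnP β hβ
      have hind : IndepAt α β s := by
        refine hpers 0 (fun _ => s) (fun _ => α) rfl ?_ ?_ hs.2 β hβ
        · intro i _; exact hαP
        · intro i hi; omega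
      obtain ⟨s', hβs, hαs'⟩ := (hind.2.1 hβen).mp hs.2
      refine ⟨β, s', hβ, hβs, ?_, hαs'⟩
      exact hs.1.tail ⟨β, hPsub s hβ, hβ, hβs⟩
    choose βf sf hβP hβs hG using step
    -- build an infinite reduced sequence keeping α enabled
    have hGood0 : Good s₀ := ⟨Relation.ReflTransGen.refl, hen⟩
    let seq : ℕ → {s : S // Good s} :=
      fun n => Nat.rec ⟨s₀, hGood0⟩ (fun _ p => ⟨sf p.1 p.2, hG p.1 p.2⟩) n
    have hseq : ∀ n, (seq (n+1)).1 = sf (seq n).1 (seq n).2 := fun n => rfl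
    obtain ⟨i, j, hij, heq⟩ :=
      Finite.exists_ne_map_eq_of_infinite (fun n => (seq n).1)
    wlog hlt : i < j generalizing i j
    · exact this j i hij.symm heq.symm (by omega)
    -- apply the cycle condition on the segment from i to j
    have hpath : ∀ k < j - i,
        (fun k => βf (seq (i+k)).1 (seq (i+k)).2) k ∈ T ∧
        (fun k => βf (seq (i+k)).1 (seq (i+k)).2) k ∈ P ((fun k => (seq (i+k)).1) k) ∧
        (fun k => βf (seq (i+k)).1 (seq (i+k)).2) k ((fun k => (seq (i+k)).1) k)
          = some ((fun k => (seq (i+k)).1) (k+1)) := by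
      intro k _
      refine ⟨hPsub _ (hβP _ _), hβP _ _, ?_⟩
      show βf (seq (i+k)).1 (seq (i+k)).2 (seq (i+k)).1 = some (seq (i+(k+1))).1
      have h2 : i + (k+1) = (i+k) + 1 := by omega
      rw [h2, hseq (i+k)]
      exact hβs _ _
    obtain ⟨k, hk, hkP⟩ := hcycle (j - i) (fun k => (seq (i+k)).1)
      (fun k => βf (seq (i+k)).1 (seq (i+k)).2) (by omega)
      (by rw [Nat.add_sub_cancel' (le_of_lt hlt), Nat.add_zero]; exact heq.symm)
      hpath α hαT ⟨0, by omega, by simpa using (seq i).2.2⟩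
    exact hcon _ (seq (i+k)).2 hkP
  obtain ⟨s, ⟨hreach, hsen⟩, hsP⟩ := key
  obtain ⟨t, hαs⟩ := Option.isSome_iff_exists.mp hsen
  have hfin : PathTo T P s₀ t :=
    pathTo_extend (rtg_pathTo hreach) hαT hsP hαs
  obtain ⟨n, st, tr, h0, hn, hp⟩ := hfin
  exact ⟨n, st, tr, h0, hp, hn ▸ ⟨s, α, hα, hαs⟩⟩
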